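/- For every t ∈ ℤ the series φ(t) := Σ_{k=0}^∞ α^k Π(t,k)ᵀ G(t−k) converges absolutely, and the resulting two-sided sequence satisfies the stationary eligibility recursion φ(t) = α A(t)ᵀ φ(t−1) + G(t) for every t ∈ ℤ. -/

import Mathlib

open Matrix
open scoped Matrix.Norms.L2Operator

/-- The backward product `Π(t,k) = A(t−k+1) A(t−k+2) ⋯ A(t)`, with `Π(t,0) = I`. -/
noncomputable def prodA {d : ℕ} (A : ℤ → Matrix (Fin d) (Fin d) ℝ) (t : ℤ) :
    ℕ → Matrix (Fin d) (Fin d) ℝ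
  | 0 => 1
  | k + 1 => A (t - k) * prodA A t k

lemma prodA_succ_eq {d : ℕ} (A : ℤ → Matrix (Fin d) (Fin d) ℝ) (t : ℤ) (k : ℕ) :
    prodA A t (k + 1) = prodA A (t - 1) k * A t := by
  induction k with
  | zero => simp [prodA]
  | succ k ih =>
    have h1 : prodA A t (k + 1 + 1) = A (t - (k+1)) * prodA A t (k+1) := rfl
    have h2 : prodA A (t-1) (k + 1) = A (t - 1 - k) * prodA A (t-1) k := rfl
    rw [h1, ih, h2, Matrix.mul_assoc]
    congr 2
    ring_nf

/-- Left multiplication by a fixed matrix, as a linear map. -/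
noncomputable def mulLeftLM {d ℓ : ℕ} (M : Matrix (Fin d) (Fin d) ℝ) :
    Matrix (Fin d) (Fin ℓ) ℝ →ₗ[ℝ] Matrix (Fin d) (Fin ℓ) ℝ where
  toFun X := M * X
  map_add' X Y := Matrix.mul_add M X Y
  map_smul' c X := (Matrix.mul_smul M c X)

/-- For every `t ∈ ℤ` the series `φ(t) = ∑_k α^k Π(t,k)ᵀ G(t−k)` converges
absolutely (in operator norm), and the resulting two-sided sequence satisfies the stationary
eligibility recursion `φ(t) = α A(t)ᵀ φ(t−1) + G(t)`. -/
theorem stationary_eligibility_vector_recursion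
    (d ℓ : ℕ) (α : ℝ)
    (A : ℤ → Matrix (Fin d) (Fin d) ℝ) (G : ℤ → Matrix (Fin d) (Fin ℓ) ℝ)
    (habs : ∀ t : ℤ, Summable fun k : ℕ => |α| ^ k * ‖prodA A t k‖ * ‖G (t - k)‖) :
    (∀ t : ℤ, Summable fun k : ℕ => ‖α ^ k • ((prodA A t k)ᵀ * G (t - k))‖) ∧
    ∀ t : ℤ, (∑' k : ℕ, α ^ k • ((prodA A t k)ᵀ * G (t - k)))
      = α • ((A t)ᵀ * ∑' k : ℕ, α ^ k • ((prodA A (t - 1) k)ᵀ * G (t - 1 - k))) + G t := by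
  have hnorm : ∀ t : ℤ, ∀ k : ℕ, ‖α ^ k • ((prodA A t k)ᵀ * G (t - k))‖
      ≤ |α| ^ k * ‖prodA A t k‖ * ‖G (t - k)‖ := by
    intro t k
    rw [norm_smul, Real.norm_eq_abs, abs_pow, mul_assoc]
    gcongr
    calc ‖(prodA A t k)ᵀ * G (t - k)‖ ≤ ‖(prodA A t k)ᵀ‖ * ‖G (t - k)‖ :=
          Matrix.l2_opNorm_mul _ _
      _ = ‖prodA A t k‖ * ‖G (t - k)‖ := by
          rw [← Matrix.conjTranspose_eq_transpose_of_trivial,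
            Matrix.l2_opNorm_conjTranspose]
  have hsum : ∀ t : ℤ, Summable fun k : ℕ => ‖α ^ k • ((prodA A t k)ᵀ * G (t - k))‖ := by
    intro t
    exact (habs t).of_nonneg_of_le (fun k => norm_nonneg _) (hnorm t)
  refine ⟨hsum, fun t => ?_⟩
  have hS : ∀ t : ℤ, Summable fun k : ℕ => α ^ k • ((prodA A t k)ᵀ * G (t - k)) :=
    fun t => (hsum t).of_norm
  rw [Summable.tsum_eq_zero_add (hS t)]
  have hterm : ∀ k : ℕ, α ^ (k+1) • ((prodA A t (k+1))ᵀ * G (t - (k+1 : ℕ)))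
      = α • ((A t)ᵀ * (α ^ k • ((prodA A (t-1) k)ᵀ * G (t - 1 - k)))) := by
    intro k
    have h1 : (prodA A t (k+1))ᵀ = (A t)ᵀ * (prodA A (t-1) k)ᵀ := by
      rw [prodA_succ_eq, Matrix.transpose_mul]
    have h2 : t - ((k : ℤ) + 1) = t - 1 - k := by ring
    rw [h1]
    push_cast [h2]
    rw [Matrix.mul_smul, Matrix.mul_assoc, smul_smul, pow_succ, mul_comm]
  simp only [hterm]
  have : (∑' k : ℕ, α • ((A t)ᵀ * (α ^ k • ((prodA A (t-1) k)ᵀ * G (t - 1 - k)))))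
      = α • ((A t)ᵀ * ∑' k : ℕ, α ^ k • ((prodA A (t - 1) k)ᵀ * G (t - 1 - k))) := by
    rw [tsum_const_smul'']
    congr 1
    simpa [mulLeftLM] using
      ((LinearMap.toContinuousLinearMap (mulLeftLM (ℓ := ℓ) (A t)ᵀ)).map_tsum
        (hS (t-1))).symm
  rw [this]
  simp [prodA, add_comm]
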